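/- Let X ⊆ {0,1}^m be a finite set of query points and define: X 'distinguishes' g_{j,k} from 2·val if there exist x, y ∈ X with val(x) < val(y) and g_{j,k}(x) > g_{j,k}(y). If |X| ≤ m'/(8ε) (with ε = 2^{m'−m−1}), then the number of pairs (j,k) with j ∈ [m'], k ∈ [1/(2ε)] such that X distinguishes g_{j,k} from 2·val is at most (m'/(2ε)) − m'/(8ε); i.e., at least m'/(8ε) of the functions g_{j,k} are indistinguishable from 2·val using comparisons among points of X. -/

import Mathlib

def val {m : ℕ} (x : Fin m → Bool) : ℕ := ∑ i, if x i then 2 ^ (i : ℕ) else 0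

/-- The block `S_k` (for `k = 1, …, 2^(m-m′)`): points `x` with
`val x ∈ [(k−1)·2^m′, k·2^m′)`. -/
def Sblock {m : ℕ} (m' k : ℕ) : Finset (Fin m → Bool) :=
  Finset.univ.filter fun x => (k - 1) * 2 ^ m' ≤ val x ∧ val x < k * 2 ^ m'

/-- `g_{j,k} x = 2·val x − 2·2^j − 1` if `x j = 1` and `x ∈ S_k`, else `2·val x`
(0-indexed coordinate `j` has bit weight `2^j`, so twice the weight is `2^(j+1)`). -/
def gjk {m : ℕ} (m' : ℕ) (j : Fin m) (k : ℕ) (x : Fin m → Bool) : ℤ :=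
  if x j = true ∧ x ∈ Sblock (m := m) m' k
  then 2 * (val x : ℤ) - 2 ^ ((j : ℕ) + 1) - 1 else 2 * (val x : ℤ)

lemma val_decomp {m : ℕ} (x : Fin (m+1) → Bool) :
    val x = (if x 0 then 1 else 0) + 2 * val (fun i => x i.succ) := by
  unfold val
  rw [Fin.sum_univ_succ, Finset.mul_sum]
  have h0 : (if x 0 = true then 2 ^ ((0 : Fin (m+1)) : ℕ) else 0) = (if x 0 = true then 1 else 0) := by
    simp
  rw [h0]
  congr 1
  refine Finset.sum_congr rfl fun i _ => ?_
  rw [Fin.val_succ, pow_succ]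
  split <;> ring

lemma val_lt {m : ℕ} (x : Fin m → Bool) : val x < 2 ^ m := by
  induction m with
  | zero => simp [val]
  | succ n ih =>
    rw [val_decomp]
    have := ih (fun i => x i.succ)
    have h2 : (2:ℕ) ^ (n+1) = 2 * 2 ^ n := by ring
    split <;> omega

lemma val_testBit : ∀ {m : ℕ} (x : Fin m → Bool) (t : ℕ) (ht : t < m),
    (val x).testBit t = x ⟨t, ht⟩ := by
  intro m
  induction m with
  | zero => intro x t ht; omega
  | succ n ih =>
    intro x t ht
    rw [val_decomp]
    cases t with
    | zero =>
      rcases h : x 0 <;> simp [Nat.testBit_zero, h] <;> omega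
    | succ t =>
      rw [Nat.testBit_succ]
      have hdiv : ((if x 0 then 1 else 0) + 2 * val (fun i => x i.succ)) / 2
           = val (fun i => x i.succ) := by split <;> omega
      rw [hdiv, ih (fun i => x i.succ) t (by omega)]
      rfl

lemma mod_lt_of_testBit_false {a j : ℕ} (h : a.testBit j = false) :
    a % 2 ^ (j+1) < 2 ^ j := by
  have h2 : a / 2 ^ j % 2 ≠ 1 := by
    intro hc
    rw [Nat.testBit_eq_decide_div_mod_eq, hc] at h
    simp at h
  have h3 : a % 2 ^ (j+1) = a % 2 ^ j + 2 ^ j * (a / 2 ^ j % 2) := by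
    rw [pow_succ, Nat.mod_mul]
  have h4 : a % 2 ^ j < 2 ^ j := Nat.mod_lt _ (by positivity)
  have h5 : a / 2 ^ j % 2 < 2 := Nat.mod_lt _ (by norm_num)
  have h6 : a / 2 ^ j % 2 = 0 := by omega
  rw [h3, h6, Nat.mul_zero, Nat.add_zero]
  exact h4

lemma le_mod_of_testBit_true {a j : ℕ} (h : a.testBit j = true) :
    2 ^ j ≤ a % 2 ^ (j+1) := by
  have h2 : a / 2 ^ j % 2 = 1 := by
    rw [Nat.testBit_eq_decide_div_mod_eq] at h
    exact of_decide_eq_true h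
  have h3 : a % 2 ^ (j+1) = a % 2 ^ j + 2 ^ j * (a / 2 ^ j % 2) := by
    rw [pow_succ, Nat.mod_mul]
  rw [h3, h2, Nat.mul_one]
  omega

lemma div_eq_of_close {a b j : ℕ} (hab : a < b) (hba : b ≤ a + 2 ^ j)
    (ha : a.testBit j = false) (hb : b.testBit j = true) :
    a / 2 ^ (j+1) = b / 2 ^ (j+1) := by
  set P := 2 ^ (j+1) with hP
  have hPp : P = 2 * 2 ^ j := by rw [hP]; ring
  have hra : a % P < 2 ^ j := mod_lt_of_testBit_false ha
  have hrb : 2 ^ j ≤ b % P := le_mod_of_testBit_true hb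
  have hrb' : b % P < P := Nat.mod_lt _ (by positivity)
  have ea : P * (a / P) + a % P = a := Nat.div_add_mod a P
  have eb : P * (b / P) + b % P = b := Nat.div_add_mod b P
  rcases lt_trichotomy (a / P) (b / P) with h | h | h
  · exfalso
    have key : P * (a / P) + P ≤ P * (b / P) := by
      have := Nat.mul_le_mul_left (k := P) (Nat.succ_le_of_lt h)
      rw [Nat.mul_succ] at this
      exact this
    omega
  · exact h
  · exfalso
    have key : P * (b / P) + P ≤ P * (a / P) := by
      have := Nat.mul_le_mul_left (k := P) (Nat.succ_le_of_lt h)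
      rw [Nat.mul_succ] at this
      exact this
    omega

lemma testBit_eq_of_close {a b j : ℕ} (hab : a < b) (hba : b ≤ a + 2 ^ j)
    (ha : a.testBit j = false) (hb : b.testBit j = true) :
    ∀ t, j < t → a.testBit t = b.testBit t := by
  intro t ht
  have hdiv := div_eq_of_close hab hba ha hb
  have h1 : ∀ c : ℕ, c.testBit t = (c / 2 ^ (j+1)).testBit (t - (j+1)) := by
    intro c
    rw [← Nat.shiftRight_eq_div_pow, Nat.testBit_shiftRight]
    congr 1
    omega
  rw [h1 a, h1 b, hdiv]

def captures {m : ℕ} (Y : Finset (Fin m → Bool)) (j : Fin m) : Prop :=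
  ∃ u ∈ Y, ∃ v ∈ Y, u j ≠ v j ∧ ∀ i, j < i → u i = v i

instance {m : ℕ} (Y : Finset (Fin m → Bool)) : DecidablePred (captures Y) := fun j => by
  unfold captures; infer_instance

lemma card_captures_lt {m : ℕ} :
    ∀ Y : Finset (Fin m → Bool), Y.Nonempty →
      (Finset.univ.filter (captures Y)).card < Y.card := by
  intro Y
  induction Y using Finset.strongInduction with
  | _ Y ih =>
    intro hY
    set C := Finset.univ.filter (captures Y) with hC
    rcases C.eq_empty_or_nonempty with h | h
    · rw [h]; simpa using Finset.card_pos.mpr hY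
    · set j0 := C.max' h with hj0def
      have hj0 : captures Y j0 := (Finset.mem_filter.mp (C.max'_mem h)).2
      obtain ⟨u, hu, v, hv, huv, -⟩ := hj0
      set Y0 := Y.filter (fun w => w j0 = false) with hY0def
      set Y1 := Y.filter (fun w => w j0 = true) with hY1def
      have hY1e : Y1 = Y.filter (fun w => ¬ (w j0 = false)) := by
        rw [hY1def]
        apply Finset.filter_congr
        intro w _
        simp
      have hcard : Y0.card + Y1.card = Y.card := by
        rw [hY0def, hY1e]
        exact Finset.card_filter_add_card_filter_not _
      have hmemY : ∀ w ∈ Y, w j0 = false → w ∈ Y0 := fun w hw hwb =>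
        Finset.mem_filter.mpr ⟨hw, hwb⟩
      have hmemY1 : ∀ w ∈ Y, w j0 = true → w ∈ Y1 := fun w hw hwb =>
        Finset.mem_filter.mpr ⟨hw, hwb⟩
      have hY0ne : Y0.Nonempty := by
        cases hub : u j0 with
        | false => exact ⟨u, hmemY u hu hub⟩
        | true =>
          cases hvb : v j0 with
          | false => exact ⟨v, hmemY v hv hvb⟩
          | true => exact absurd (hub.trans hvb.symm) huv
      have hY1ne : Y1.Nonempty := by
        cases hub : u j0 with
        | true => exact ⟨u, hmemY1 u hu hub⟩
        | false =>
          cases hvb : v j0 with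
          | true => exact ⟨v, hmemY1 v hv hvb⟩
          | false => exact absurd (hub.trans hvb.symm) huv
      have hsub0 : Y0 ⊂ Y := by
        refine ⟨Finset.filter_subset _ _, fun hss => ?_⟩
        obtain ⟨w, hw⟩ := hY1ne
        have hw1 := Finset.mem_filter.mp hw
        have := Finset.mem_filter.mp (hss hw1.1)
        rw [hw1.2] at this
        simp at this
      have hsub1 : Y1 ⊂ Y := by
        refine ⟨Finset.filter_subset _ _, fun hss => ?_⟩
        obtain ⟨w, hw⟩ := hY0ne
        have hw1 := Finset.mem_filter.mp hw
        have := Finset.mem_filter.mp (hss hw1.1)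
        rw [hw1.2] at this
        simp at this
      have hincl : C ⊆ insert j0
          ((Finset.univ.filter (captures Y0)) ∪ (Finset.univ.filter (captures Y1))) := by
        intro j hj
        rcases eq_or_ne j j0 with rfl | hne
        · exact Finset.mem_insert_self _ _
        · have hjlt : j < j0 := lt_of_le_of_ne (Finset.le_max' C j hj) hne
          obtain ⟨p, hp, q, hq, hpq, hag⟩ := (Finset.mem_filter.mp hj).2
          have hpq0 : p j0 = q j0 := hag j0 hjlt
          refine Finset.mem_insert_of_mem (Finset.mem_union.mpr ?_)
          cases h' : p j0 with
          | false =>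
            exact Or.inl (Finset.mem_filter.mpr ⟨Finset.mem_univ _,
              ⟨p, hmemY p hp h', q, hmemY q hq (hpq0.symm.trans h'), hpq, hag⟩⟩)
          | true =>
            exact Or.inr (Finset.mem_filter.mpr ⟨Finset.mem_univ _,
              ⟨p, hmemY1 p hp h', q, hmemY1 q hq (hpq0.symm.trans h'), hpq, hag⟩⟩)
      have h0 := ih Y0 hsub0 hY0ne
      have h1 := ih Y1 hsub1 hY1ne
      have hle : C.card ≤ 1 + ((Finset.univ.filter (captures Y0)).card
          + (Finset.univ.filter (captures Y1)).card) := by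
        calc C.card ≤ (insert j0 ((Finset.univ.filter (captures Y0))
              ∪ (Finset.univ.filter (captures Y1)))).card := Finset.card_le_card hincl
          _ ≤ 1 + ((Finset.univ.filter (captures Y0))
              ∪ (Finset.univ.filter (captures Y1))).card := by
              have := Finset.card_insert_le j0 ((Finset.univ.filter (captures Y0))
                ∪ (Finset.univ.filter (captures Y1)))
              omega
          _ ≤ _ := by
              have := Finset.card_union_le (Finset.univ.filter (captures Y0))
                (Finset.univ.filter (captures Y1))
              omega
      omega

lemma mem_Sblock_iff {m m' k : ℕ} (x : Fin m → Bool) :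
    x ∈ Sblock (m := m) m' k ↔ (k - 1) * 2 ^ m' ≤ val x ∧ val x < k * 2 ^ m' := by
  simp [Sblock]

lemma dist_captures {m m' : ℕ} (hm : m' ≤ m) (X : Finset (Fin m → Bool))
    (j : Fin m') (k : ℕ) (hk : 1 ≤ k)
    (h : ∃ x ∈ X, ∃ y ∈ X, val x < val y ∧
      gjk m' (Fin.castLE hm j) k y < gjk m' (Fin.castLE hm j) k x) :
    captures (X.filter (· ∈ Sblock m' k)) (Fin.castLE hm j) := by
  obtain ⟨x, hx, y, hy, hval, hg⟩ := h
  set j' := Fin.castLE hm j with hj'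
  have hjm : (j' : ℕ) = (j : ℕ) := rfl
  have hjlt : (j : ℕ) < m' := j.isLt
  -- case analysis on whether x, y are modified
  by_cases hMx : x j' = true ∧ x ∈ Sblock m' k <;>
    by_cases hMy : y j' = true ∧ y ∈ Sblock m' k <;>
      rw [gjk, gjk] at hg
  · -- both modified : contradiction
    rw [if_pos hMx, if_pos hMy] at hg
    exfalso; omega
  · -- x modified, y not : contradiction
    rw [if_pos hMx, if_neg hMy] at hg
    exfalso
    have hp : (0:ℤ) < 2 ^ ((j':ℕ) + 1) := by positivity
    omega
  · -- y modified, x not : the main case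
    rw [if_neg hMx, if_pos hMy] at hg
    obtain ⟨hyj, hySb⟩ := hMy
    -- val y ≤ val x + 2^j
    have hpow : ((2 ^ ((j:ℕ) + 1) : ℕ) : ℤ) = 2 ^ ((j':ℕ) + 1) := by
      push_cast [hjm]; ring
    have hperel : (2:ℕ) ^ ((j:ℕ) + 1) = 2 * 2 ^ (j:ℕ) := by ring
    have hclose : val y ≤ val x + 2 ^ (j:ℕ) := by omega
    have hySb' := (mem_Sblock_iff y).mp hySb
    -- testBit facts for y
    have hty : (val y).testBit (j:ℕ) = true := by
      rw [val_testBit y (j:ℕ) (lt_of_lt_of_le hjlt hm)]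
      exact hyj
    -- x is in the block
    have hxSb : x ∈ Sblock m' k := by
      rw [mem_Sblock_iff]
      refine ⟨?_, by omega⟩
      by_contra hlow
      push_neg at hlow
      -- val y ≥ (k-1) * 2^m' + 2^j
      have h1 : (val y) % 2 ^ m' ≥ 2 ^ (j:ℕ) := by
        apply Nat.ge_two_pow_of_testBit
        rw [Nat.testBit_mod_two_pow]
        simp [hjlt, hty]
      have h2 : val y / 2 ^ m' = k - 1 := by
        apply Nat.div_eq_of_lt_le
        · exact hySb'.1
        · have : k - 1 + 1 = k := by omega
          rw [this]; exact hySb'.2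
      have h3 : 2 ^ m' * (val y / 2 ^ m') + val y % 2 ^ m' = val y := Nat.div_add_mod _ _
      rw [h2] at h3
      have h4 : 2 ^ m' * (k-1) = (k-1) * 2 ^ m' := Nat.mul_comm _ _
      omega
    have hxj : x j' = false := by
      cases hxb : x j' with
      | false => rfl
      | true => exact absurd ⟨hxb, hxSb⟩ hMx
    have htx : (val x).testBit (j:ℕ) = false := by
      rw [val_testBit x (j:ℕ) (lt_of_lt_of_le hjlt hm)]
      exact hxj
    -- capture
    refine ⟨x, Finset.mem_filter.mpr ⟨hx, hxSb⟩, y, Finset.mem_filter.mpr ⟨hy, hySb⟩, ?_, ?_⟩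
    · rw [hxj, hyj]; simp
    · intro i hi
      have hbits := testBit_eq_of_close hval hclose htx hty (i:ℕ) hi
      rw [val_testBit x (i:ℕ) i.isLt, val_testBit y (i:ℕ) i.isLt] at hbits
      simpa using hbits
  · -- neither modified : contradiction
    rw [if_neg hMx, if_neg hMy] at hg
    exfalso; omega

lemma block_partition {m m' : ℕ} (hm : m' ≤ m) (X : Finset (Fin m → Bool)) :
    ∑ k ∈ Finset.Icc 1 (2 ^ (m - m')), (X.filter (· ∈ Sblock m' k)).card = X.card := by
  have hpos : 0 < 2 ^ m' := by positivity
  have hmem : ∀ x ∈ X, val x / 2 ^ m' + 1 ∈ Finset.Icc 1 (2 ^ (m - m')) := by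
    intro x _
    rw [Finset.mem_Icc]
    refine ⟨Nat.succ_le_succ (Nat.zero_le _), ?_⟩
    have h1 : val x < 2 ^ m := val_lt x
    have h2 : (2:ℕ) ^ m = 2 ^ m' * 2 ^ (m - m') := by
      rw [← pow_add]; congr 1; omega
    rw [h2] at h1
    exact Nat.succ_le_of_lt (Nat.div_lt_of_lt_mul h1)
  rw [Finset.card_eq_sum_card_fiberwise hmem]
  refine Finset.sum_congr rfl fun k hk => ?_
  rw [Finset.mem_Icc] at hk
  obtain ⟨K, rfl⟩ : ∃ K, k = K + 1 := ⟨k - 1, by omega⟩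
  congr 1
  apply Finset.filter_congr
  intro x _
  rw [mem_Sblock_iff]
  have hKs : K + 1 - 1 = K := by omega
  rw [hKs]
  constructor
  · rintro ⟨h1, h2⟩
    have hd : val x / 2 ^ m' = K := Nat.div_eq_of_lt_le h1 h2
    omega
  · intro he
    have hd : val x / 2 ^ m' = K := by omega
    refine ⟨?_, ?_⟩
    · rw [← hd]
      exact Nat.div_mul_le_self _ _
    · exact (Nat.div_lt_iff_lt_mul hpos).mp (show val x / 2 ^ m' < K + 1 by omega)

lemma filter_product_card {m' N : ℕ} (p : Fin m' × ℕ → Prop) [DecidablePred p] :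
    (((Finset.univ : Finset (Fin m')) ×ˢ Finset.Icc 1 N).filter p).card
      = ∑ k ∈ Finset.Icc 1 N, (Finset.univ.filter fun j : Fin m' => p (j, k)).card := by
  rw [Finset.card_filter, Finset.sum_product_right]
  exact Finset.sum_congr rfl fun k _ => by rw [Finset.card_filter]

lemma main_count {m m' : ℕ} (hm : m' ≤ m) (X : Finset (Fin m → Bool))
    (hX : 4 * X.card ≤ m' * 2 ^ (m - m'))
    (q : Fin m' → ℕ → Prop) [inst : ∀ j k, Decidable (q j k)]
    (hq : ∀ j k, 1 ≤ k → q j k →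
      captures (X.filter (· ∈ Sblock m' k)) (Fin.castLE hm j)) :
    m' * 2 ^ (m - m') ≤
      4 * ∑ k ∈ Finset.Icc 1 (2 ^ (m - m')),
        (Finset.univ.filter fun j : Fin m' => ¬ q j k).card := by
  set N := 2 ^ (m - m') with hN
  set Yk : ℕ → Finset (Fin m → Bool) := fun k => X.filter (· ∈ Sblock m' k) with hYk
  have hblock : ∀ k ∈ Finset.Icc 1 N, 2 * (Yk k).card ≤ m' →
      m' ≤ 2 * (Finset.univ.filter fun j : Fin m' => ¬ q j k).card := by
    intro k hk hsmall
    rw [Finset.mem_Icc] at hk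
    have hsplit : (Finset.univ.filter fun j : Fin m' => q j k).card
        + (Finset.univ.filter fun j : Fin m' => ¬ q j k).card = m' := by
      have := Finset.card_filter_add_card_filter_not
        (s := (Finset.univ : Finset (Fin m'))) (p := fun j : Fin m' => q j k)
      simpa using this
    have hD : (Finset.univ.filter fun j : Fin m' => q j k).card
        ≤ (Finset.univ.filter (captures (Yk k))).card := by
      apply Finset.card_le_card_of_injOn (Fin.castLE hm)
      · intro j hj
        rw [Finset.mem_coe, Finset.mem_filter] at hj ⊢
        exact ⟨Finset.mem_univ _, hq j k hk.1 hj.2⟩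
      · intro a _ b _ hab
        exact Fin.castLE_injective hm hab
    rcases (Yk k).eq_empty_or_nonempty with he | hne
    · have hzero : (Finset.univ.filter (captures (Yk k))).card = 0 := by
        rw [Finset.card_eq_zero, Finset.filter_eq_empty_iff]
        intro j _
        rw [he]
        rintro ⟨u, hu, -⟩
        simp at hu
      omega
    · have := card_captures_lt (Yk k) hne
      omega
  set B := (Finset.Icc 1 N).filter (fun k => m' < 2 * (Yk k).card) with hB
  have hBbound : B.card * (m' + 1) ≤ 2 * X.card := by
    calc B.card * (m'+1) = ∑ _k ∈ B, (m'+1) := by rw [Finset.sum_const, smul_eq_mul]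
      _ ≤ ∑ k ∈ B, 2 * (Yk k).card := Finset.sum_le_sum fun k hk => by
          have := (Finset.mem_filter.mp hk).2; omega
      _ ≤ ∑ k ∈ Finset.Icc 1 N, 2 * (Yk k).card :=
          Finset.sum_le_sum_of_subset (Finset.filter_subset _ _)
      _ = 2 * X.card := by rw [← Finset.mul_sum, block_partition hm X]
  have h2B : 2 * B.card ≤ N := by
    have h1 : (2 * B.card) * (m' + 1) ≤ N * (m' + 1) := by
      calc (2*B.card)*(m'+1) = 2*(B.card*(m'+1)) := by ring
        _ ≤ 2 * (2 * X.card) := by omega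
        _ = 4 * X.card := by ring
        _ ≤ m' * N := hX
        _ ≤ N * (m' + 1) := by
            rw [Nat.mul_comm]
            exact Nat.mul_le_mul_left N (show m' ≤ m' + 1 by omega)
    exact Nat.le_of_mul_le_mul_right h1 (by omega)
  set G := (Finset.Icc 1 N).filter (fun k => ¬ (m' < 2 * (Yk k).card)) with hG
  have hGB : B.card + G.card = N := by
    rw [hB, hG, Finset.card_filter_add_card_filter_not]
    simp [Nat.card_Icc]
  calc m' * N ≤ m' * (2 * G.card) := Nat.mul_le_mul_left m' (show N ≤ 2 * G.card by omega)
    _ = 2 * (G.card * m') := by ring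
    _ = 2 * ∑ _k ∈ G, m' := by rw [Finset.sum_const, smul_eq_mul]
    _ ≤ 2 * ∑ k ∈ G, 2 * (Finset.univ.filter fun j : Fin m' => ¬ q j k).card := by
        apply Nat.mul_le_mul_left
        apply Finset.sum_le_sum
        intro k hk
        have hk' := Finset.mem_filter.mp hk
        exact hblock k hk'.1 (by omega)
    _ = 4 * ∑ k ∈ G, (Finset.univ.filter fun j : Fin m' => ¬ q j k).card := by
        rw [← Finset.mul_sum]; ring
    _ ≤ 4 * ∑ k ∈ Finset.Icc 1 N, (Finset.univ.filter fun j : Fin m' => ¬ q j k).card := by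
        apply Nat.mul_le_mul_left
        exact Finset.sum_le_sum_of_subset (Finset.filter_subset _ _)

/-- `X` distinguishes `g_{j,k}` from `2·val` if some pair of points of `X` is ordered
by `val` but violated by `g_{j,k}`. If `|X| ≤ m′/(8ε) = m′·2^(m−m′)/4` (with
`ε = 2^(m′−m−1)`), then at least `m′/(8ε) = m′·2^(m−m′)/4` of the `m′·2^(m−m′)`
functions `g_{j,k}` are indistinguishable from `2·val` using comparisons in `X`. -/
theorem stmt15 {m : ℕ} (m' : ℕ) (hm : m' ≤ m) (X : Finset (Fin m → Bool))
    (hX : 4 * X.card ≤ m' * 2 ^ (m - m')) :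
    m' * 2 ^ (m - m') ≤ 4 *
      (((Finset.univ : Finset (Fin m')) ×ˢ Finset.Icc 1 (2 ^ (m - m'))).filter
        fun p : Fin m' × ℕ => ¬ ∃ x ∈ X, ∃ y ∈ X, val x < val y ∧
          gjk m' (Fin.castLE hm p.1) p.2 y < gjk m' (Fin.castLE hm p.1) p.2 x).card := by
  rw [filter_product_card]
  have := main_count hm X hX
    (fun j k => ∃ x ∈ X, ∃ y ∈ X, val x < val y ∧
      gjk m' (Fin.castLE hm j) k y < gjk m' (Fin.castLE hm j) k x)
    (fun j k hk h => dist_captures hm X j k hk h)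
  convert this using 3
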